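/- For natural numbers n ≥ 1 and k ≥ 0, the imaginary part of ∫₀^π ((exp(e^{iθ}) − 1)^k / k!) · sin(nθ) dθ equals ({n choose k}/n!)·(π/2), where {n choose k} is the Stirling number of the second kind. -/

import Mathlib

/-- Stirling numbers of the second kind. -/
def stirling : ℕ → ℕ → ℕ
  | 0, 0 => 1
  | 0, _ + 1 => 0
  | _ + 1, 0 => 0
  | n + 1, k + 1 => (k + 1) * stirling n (k + 1) + stirling n k

/-- Bell numbers, via the standard recurrence. -/
def bell : ℕ → ℕ
  | 0 => 1
  | n + 1 => ∑ k ∈ (Finset.range (n + 1)).attach, Nat.choose n k.1 * bell k.1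
decreasing_by exact Finset.mem_range.mp k.2

open Real Complex MeasureTheory intervalIntegral Finset
open Finset in
lemma lemB (n k : ℕ) :
    ∑ i ∈ range (k+1), (-1:ℤ)^(k-i) * (k.choose i) * (i+1)^n
    = ∑ j ∈ range (k+2), (-1:ℤ)^(k+1-j) * ((k+1).choose j) * (j:ℤ)^n
    + ∑ j ∈ range (k+1), (-1:ℤ)^(k-j) * (k.choose j) * (j:ℤ)^n := by
  have h1 : ∑ j ∈ range (k+2), (-1:ℤ)^(k+1-j) * ((k+1).choose j) * (j:ℤ)^n
      = ∑ i ∈ range (k+1), (-1:ℤ)^(k-i) * (((k.choose i) : ℤ) + (k.choose (i+1))) * ((i:ℤ)+1)^n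
        + (-1:ℤ)^(k+1) * 1 * (0:ℤ)^n := by
    rw [Finset.sum_range_succ']
    congr 1
    refine Finset.sum_congr rfl fun i hi => ?_
    have hik : i ≤ k := by simpa using Nat.lt_succ_iff.mp (mem_range.mp hi)
    have : k + 1 - (i+1) = k - i := by omega
    rw [this, Nat.choose_succ_succ]
    push_cast
    ring
  have h2 : ∑ j ∈ range (k+2), (-1:ℤ)^(k+1-j) * (k.choose j) * (j:ℤ)^n
      = ∑ i ∈ range (k+1), (-1:ℤ)^(k-i) * (k.choose (i+1)) * ((i:ℤ)+1)^n
        + (-1:ℤ)^(k+1) * 1 * (0:ℤ)^n := by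
    rw [Finset.sum_range_succ']
    congr 1
    · refine Finset.sum_congr rfl fun i hi => ?_
      have : k + 1 - (i+1) = k - i := by omega
      rw [this]; push_cast; ring
    · simp
  have h3 : ∑ j ∈ range (k+2), (-1:ℤ)^(k+1-j) * (k.choose j) * (j:ℤ)^n
      = - ∑ j ∈ range (k+1), (-1:ℤ)^(k-j) * (k.choose j) * (j:ℤ)^n := by
    rw [Finset.sum_range_succ, Nat.choose_succ_self]
    rw [← Finset.sum_neg_distrib]
    simp only [Nat.cast_zero, mul_zero, zero_mul, add_zero]
    refine Finset.sum_congr rfl fun j hj => ?_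
    have hjk : j ≤ k := Nat.lt_succ_iff.mp (mem_range.mp hj)
    have : k + 1 - j = (k - j) + 1 := by omega
    rw [this, pow_succ]
    ring
  have key : ∑ i ∈ range (k+1), (-1:ℤ)^(k-i) * (k.choose (i+1)) * ((i:ℤ)+1)^n
      = - ∑ j ∈ range (k+1), (-1:ℤ)^(k-j) * (k.choose j) * (j:ℤ)^n
        - (-1:ℤ)^(k+1) * 1 * (0:ℤ)^n := by
    have := h2.symm.trans h3
    linarith
  rw [h1]
  have : ∀ i ∈ range (k+1),
      (-1:ℤ)^(k-i) * (((k.choose i) : ℤ) + (k.choose (i+1))) * ((i:ℤ)+1)^n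
      = (-1:ℤ)^(k-i) * (k.choose i) * ((i:ℤ)+1)^n
        + (-1:ℤ)^(k-i) * (k.choose (i+1)) * ((i:ℤ)+1)^n := by
    intro i _; ring
  rw [Finset.sum_congr rfl this, Finset.sum_add_distrib, key]
  push_cast
  ring

open Finset in
lemma stirling_formula (n : ℕ) : ∀ k : ℕ,
    ((k.factorial : ℤ) * stirling n k)
      = ∑ j ∈ range (k+1), (-1:ℤ)^(k-j) * (k.choose j) * (j:ℤ)^n := by
  induction n with
  | zero =>
    intro k
    have : ∑ j ∈ range (k+1), (-1:ℤ)^(k-j) * (k.choose j) * (j:ℤ)^0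
        = (-1:ℤ)^k * ∑ j ∈ range (k+1), (-1:ℤ)^j * (k.choose j) := by
      rw [Finset.mul_sum]
      refine Finset.sum_congr rfl fun j hj => ?_
      have hjk : j ≤ k := Nat.lt_succ_iff.mp (mem_range.mp hj)
      have h1 : (-1:ℤ)^(k-j) * (-1:ℤ)^j = (-1:ℤ)^k := by
        rw [← pow_add]; congr 1; omega
      rw [pow_zero, mul_one]
      calc (-1:ℤ)^(k-j) * (k.choose j)
          = ((-1:ℤ)^(k-j) * (-1:ℤ)^j) * ((-1:ℤ)^j * (k.choose j)) := by
            rw [← mul_assoc, mul_assoc ((-1:ℤ)^(k-j)), ← pow_add]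
            rw [show j + j = 2 * j by ring, pow_mul]
            simp
        _ = (-1:ℤ)^k * ((-1:ℤ)^j * (k.choose j)) := by rw [h1]
    rw [this, Int.alternating_sum_range_choose]
    match k with
    | 0 => simp [stirling]
    | k+1 => simp [stirling]
  | succ n ih =>
    intro k
    match k with
    | 0 => simp [stirling]
    | k+1 =>
      have hrec : ((k+1).factorial : ℤ) * stirling (n+1) (k+1)
          = ((k:ℤ)+1) * ((((k+1).factorial : ℤ) * stirling n (k+1))
              + ((k.factorial : ℤ) * stirling n k)) := by
        show ((k+1).factorial : ℤ) * ((k + 1) * stirling n (k + 1) + stirling n k : ℕ) = _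
        rw [Nat.factorial_succ]
        push_cast
        ring
      rw [hrec, ih (k+1), ih k, ← lemB n k]
      rw [show (k+1+1) = (k+1)+1 from rfl, Finset.sum_range_succ' _ (k+1), Finset.mul_sum]
      have h0 : ((0:ℕ) : ℤ)^(n+1) = 0 := by simp
      rw [h0, mul_zero, add_zero]
      refine (Finset.sum_congr rfl fun i hi => ?_).symm
      have h1 : k + 1 - (i+1) = k - i := by omega
      have h2 : ((k+1).choose (i+1) : ℤ) * ((i:ℤ)+1) = ((k:ℤ)+1) * (k.choose i) := by
        have := Nat.add_one_mul_choose_eq k i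
        have : ((k+1) * k.choose i : ℕ) = ((k+1).choose (i+1) * (i+1) : ℕ) := this
        exact_mod_cast (congrArg (Nat.cast : ℕ → ℤ) this).symm
      rw [h1]
      push_cast
      push_cast at h2
      calc (-1:ℤ)^(k-i) * ((k+1).choose (i+1)) * ((i:ℤ)+1)^(n+1)
          = (-1:ℤ)^(k-i) * (((k+1).choose (i+1) : ℤ) * ((i:ℤ)+1)) * ((i:ℤ)+1)^n := by ring
        _ = (-1:ℤ)^(k-i) * (((k:ℤ)+1) * (k.choose i)) * ((i:ℤ)+1)^n := by rw [h2]
        _ = ((k:ℤ)+1) * ((-1:ℤ)^(k-i) * (k.choose i) * ((i:ℤ)+1)^n) := by ring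

lemma integral_cos_const_mul (c : ℝ) (hc : c ≠ 0) :
    ∫ θ in (0:ℝ)..π, Real.cos (c * θ) = Real.sin (c * π) / c := by
  have := intervalIntegral.integral_comp_mul_left (a := (0:ℝ)) (b := π)
    (fun x => Real.cos x) hc
  rw [this]
  simp [integral_cos, smul_eq_mul, div_eq_inv_mul]

lemma sin_int_pi (m : ℤ) : Real.sin (m * π) = 0 := Real.sin_int_mul_pi m

lemma integral_sin_mul_sin_nat (m n : ℕ) (hn : 1 ≤ n) :
    ∫ θ in (0:ℝ)..π, Real.sin (m * θ) * Real.sin (n * θ)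
      = if m = n then π / 2 else 0 := by
  have hid : ∀ θ : ℝ, Real.sin (m * θ) * Real.sin (n * θ)
      = (Real.cos ((m - n : ℝ) * θ) - Real.cos ((m + n : ℝ) * θ)) / 2 := by
    intro θ
    rw [sub_mul, add_mul, Real.cos_sub, Real.cos_add]
    ring
  rw [intervalIntegral.integral_congr (fun θ _ => hid θ)]
  have hint1 : IntervalIntegrable (fun θ => Real.cos ((m - n : ℝ) * θ)) volume 0 π :=
    (Real.continuous_cos.comp (continuous_const.mul continuous_id)).intervalIntegrable _ _
  have hint2 : IntervalIntegrable (fun θ => Real.cos ((m + n : ℝ) * θ)) volume 0 π :=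
    (Real.continuous_cos.comp (continuous_const.mul continuous_id)).intervalIntegrable _ _
  have hsplit : ∫ θ in (0:ℝ)..π,
      (Real.cos ((m - n : ℝ) * θ) - Real.cos ((m + n : ℝ) * θ)) / 2
      = ((∫ θ in (0:ℝ)..π, Real.cos ((m - n : ℝ) * θ))
        - ∫ θ in (0:ℝ)..π, Real.cos ((m + n : ℝ) * θ)) / 2 := by
    rw [intervalIntegral.integral_div, intervalIntegral.integral_sub hint1 hint2]
  rw [hsplit]
  have hmn : ((m:ℝ) + n) ≠ 0 := by positivity
  have h2 : ∫ θ in (0:ℝ)..π, Real.cos ((m + n : ℝ) * θ) = 0 := by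
    rw [integral_cos_const_mul _ hmn]
    have : ((m:ℝ) + n) * π = ((m + n : ℤ) : ℝ) * π := by push_cast; ring
    rw [this, sin_int_pi, zero_div]
  rw [h2, sub_zero]
  by_cases h : m = n
  · subst h
    rw [if_pos rfl]
    have h1 : ∫ θ in (0:ℝ)..π, Real.cos (((m:ℝ) - m) * θ) = π := by simp
    rw [h1]
  · have hmn' : ((m:ℝ) - n) ≠ 0 := by
      intro hh
      apply h
      exact_mod_cast sub_eq_zero.mp hh
    rw [if_neg h, integral_cos_const_mul _ hmn']
    have : ((m:ℝ) - n) * π = ((m - n : ℤ) : ℝ) * π := by push_cast; ring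
    rw [this, sin_int_pi, zero_div, zero_div]

lemma key_integral (c : ℝ) (hc : 0 ≤ c) (n : ℕ) (hn : 1 ≤ n) :
    (∫ θ in (0:ℝ)..π,
        Complex.exp ((c:ℂ) * Complex.exp (θ * Complex.I)) * (Real.sin (n * θ) : ℂ)).im
      = c ^ n / n.factorial * (π / 2) := by
  set F : ℕ → ℝ → ℂ := fun m θ =>
    ((c:ℂ) * Complex.exp (θ * Complex.I)) ^ m / (m.factorial : ℂ) * (Real.sin (n * θ) : ℂ)
    with hF
  have habs : ∀ θ : ℝ, ‖(c:ℂ) * Complex.exp (θ * Complex.I)‖ = c := by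
    intro θ
    rw [norm_mul, Complex.norm_exp_ofReal_mul_I, mul_one, Complex.norm_of_nonneg hc]
  have hFcont : ∀ m : ℕ, Continuous (F m) := by
    intro m
    apply Continuous.mul
    · apply Continuous.div_const
      apply Continuous.pow
      exact continuous_const.mul ((Complex.continuous_ofReal.mul continuous_const).cexp)
    · exact Complex.continuous_ofReal.comp (Real.continuous_sin.comp (by fun_prop))
  have hfcont : Continuous (fun θ : ℝ =>
      Complex.exp ((c:ℂ) * Complex.exp (θ * Complex.I)) * (Real.sin (n * θ) : ℂ)) := by
    apply Continuous.mul
    · exact (continuous_const.mul ((Complex.continuous_ofReal.mul continuous_const).cexp)).cexp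
    · exact Complex.continuous_ofReal.comp (Real.continuous_sin.comp (by fun_prop))
  have hsum : HasSum (fun m => ∫ θ in (0:ℝ)..π, F m θ)
      (∫ θ in (0:ℝ)..π,
        Complex.exp ((c:ℂ) * Complex.exp (θ * Complex.I)) * (Real.sin (n * θ) : ℂ)) := by
    apply intervalIntegral.hasSum_integral_of_dominated_convergence
      (bound := fun m (_ : ℝ) => c ^ m / m.factorial)
    · intro m
      exact ((hFcont m).aestronglyMeasurable).restrict
    · intro m
      filter_upwards with θ _
      rw [hF]
      simp only
      rw [norm_mul, norm_div, norm_pow]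
      have h1 : ‖(c:ℂ) * Complex.exp (θ * Complex.I)‖ = c := habs θ
      rw [h1]
      have h2 : ‖((m.factorial : ℕ) : ℂ)‖ = (m.factorial : ℝ) := by
        simp [Complex.norm_natCast]
      rw [h2]
      have h3 : ‖((Real.sin (n * θ) : ℝ) : ℂ)‖ ≤ 1 := by
        rw [Complex.norm_real]
        exact abs_le.mpr ⟨neg_one_le_sin _, sin_le_one _⟩
      calc c ^ m / (m.factorial : ℝ) * ‖((Real.sin (n * θ) : ℝ) : ℂ)‖
          ≤ c ^ m / (m.factorial : ℝ) * 1 := by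
            apply mul_le_mul_of_nonneg_left h3
            positivity
        _ = c ^ m / m.factorial := mul_one _
    · filter_upwards with θ _
      exact Real.summable_pow_div_factorial c
    · exact intervalIntegrable_const
    · filter_upwards with θ _
      have := (NormedSpace.expSeries_div_hasSum_exp
        ((c:ℂ) * Complex.exp (θ * Complex.I))).mul_right ((Real.sin (n * θ) : ℂ))
      rwa [← Complex.exp_eq_exp_ℂ] at this
  -- move .im inside
  have him_swap : ∀ (g : ℝ → ℂ), IntervalIntegrable g volume 0 π →
      (∫ θ in (0:ℝ)..π, g θ).im = ∫ θ in (0:ℝ)..π, (g θ).im := by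
    intro g hg
    have := ContinuousLinearMap.intervalIntegral_comp_comm Complex.imCLM hg
      (a := 0) (b := π) (μ := volume)
    simpa [Complex.imCLM_apply] using this.symm
  have him : HasSum (fun m => (∫ θ in (0:ℝ)..π, F m θ).im)
      ((∫ θ in (0:ℝ)..π,
        Complex.exp ((c:ℂ) * Complex.exp (θ * Complex.I)) * (Real.sin (n * θ) : ℂ)).im) := by
    have := hsum.mapL Complex.imCLM
    simpa [Complex.imCLM_apply] using this
  have hterm : ∀ m : ℕ, (∫ θ in (0:ℝ)..π, F m θ).im
      = if m = n then c ^ n / n.factorial * (π / 2) else 0 := by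
    intro m
    rw [him_swap (F m) ((hFcont m).intervalIntegrable _ _)]
    have hptw : ∀ θ : ℝ, (F m θ).im
        = c ^ m / m.factorial * (Real.sin (m * θ) * Real.sin (n * θ)) := by
      intro θ
      rw [hF]
      simp only
      have h1 : ((c:ℂ) * Complex.exp (θ * Complex.I)) ^ m / (m.factorial : ℂ)
            * (Real.sin (n * θ) : ℂ)
          = ((c ^ m / m.factorial * Real.sin (n * θ) : ℝ) : ℂ)
            * Complex.exp (((m * θ : ℝ) : ℂ) * Complex.I) := by
        rw [mul_pow, ← Complex.exp_nat_mul]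
        have h2 : (m : ℂ) * ((θ:ℂ) * Complex.I) = ((m * θ : ℝ) : ℂ) * Complex.I := by
          push_cast; ring
        rw [h2]
        push_cast
        ring
      rw [h1, Complex.im_ofReal_mul, Complex.exp_ofReal_mul_I_im]
      push_cast
      ring
    rw [intervalIntegral.integral_congr (fun θ _ => hptw θ),
      intervalIntegral.integral_const_mul, integral_sin_mul_sin_nat m n hn]
    by_cases h : m = n
    · subst h; simp
    · simp [h]
  have hfin : HasSum (fun m : ℕ => if m = n then c ^ n / n.factorial * (π / 2) else 0)
      (c ^ n / n.factorial * (π / 2)) := hasSum_ite_eq n _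
  simp_rw [hterm] at him
  exact him.unique hfin

open MeasureTheory intervalIntegral Finset in
theorem im_integral_exp_sub_one_pow (n k : ℕ) (hn : 1 ≤ n) :
    (∫ θ in (0:ℝ)..π,
        (Complex.exp (Complex.exp (θ * Complex.I)) - 1) ^ k / (Nat.factorial k : ℂ) *
          (Real.sin (n * θ) : ℂ)).im =
      (stirling n k : ℝ) / Nat.factorial n * (π / 2) := by
  have hexpand : ∀ θ : ℝ,
      (Complex.exp (Complex.exp (θ * Complex.I)) - 1) ^ k / (Nat.factorial k : ℂ) *
          (Real.sin (n * θ) : ℂ)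
      = ∑ j ∈ Finset.range (k+1),
          (((-1:ℝ)^(j+k) * (k.choose j) / k.factorial : ℝ) : ℂ) *
            (Complex.exp (((j:ℝ):ℂ) * Complex.exp (θ * Complex.I)) * (Real.sin (n*θ) : ℂ)) := by
    intro θ
    rw [sub_pow, Finset.sum_div, Finset.sum_mul]
    refine Finset.sum_congr rfl fun j hj => ?_
    rw [show ((j:ℝ):ℂ) = (j:ℂ) by push_cast; ring, ← Complex.exp_nat_mul]
    push_cast
    ring
  rw [intervalIntegral.integral_congr (fun θ _ => hexpand θ)]
  have hcont : ∀ j : ℕ, Continuous (fun θ : ℝ =>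
      (((-1:ℝ)^(j+k) * (k.choose j) / k.factorial : ℝ) : ℂ) *
        (Complex.exp (((j:ℝ):ℂ) * Complex.exp (θ * Complex.I)) * (Real.sin (n*θ) : ℂ))) := by
    intro j
    apply continuous_const.mul
    apply Continuous.mul
    · exact (continuous_const.mul ((Complex.continuous_ofReal.mul continuous_const).cexp)).cexp
    · exact Complex.continuous_ofReal.comp (Real.continuous_sin.comp (by fun_prop))
  rw [intervalIntegral.integral_finset_sum
    (fun j _ => (hcont j).intervalIntegrable _ _), Complex.im_sum]
  have hterm : ∀ j ∈ Finset.range (k+1),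
      (∫ θ in (0:ℝ)..π,
        (((-1:ℝ)^(j+k) * (k.choose j) / k.factorial : ℝ) : ℂ) *
          (Complex.exp (((j:ℝ):ℂ) * Complex.exp (θ * Complex.I)) * (Real.sin (n*θ) : ℂ))).im
      = ((-1:ℝ)^(k-j) * (k.choose j) * (j:ℝ)^n) * (1 / k.factorial * (1 / n.factorial) * (π/2)) := by
    intro j hj
    rw [intervalIntegral.integral_const_mul, Complex.im_ofReal_mul,
      key_integral (j:ℝ) (Nat.cast_nonneg j) n hn]
    have hsign : ((-1:ℝ))^(j+k) = ((-1:ℝ))^(k-j) := by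
      have hjk : j ≤ k := Nat.lt_succ_iff.mp (Finset.mem_range.mp hj)
      have : (-1:ℝ)^(j+k) * (-1:ℝ)^(k-j) = 1 := by
        rw [← pow_add, show j + k + (k - j) = 2 * k by omega, pow_mul]
        norm_num
      have h2 : ((-1:ℝ))^(k-j) * ((-1:ℝ))^(k-j) = 1 := by
        rw [← pow_add, show k - j + (k - j) = 2 * (k - j) by omega, pow_mul]
        norm_num
      calc (-1:ℝ)^(j+k) = (-1:ℝ)^(j+k) * ((-1:ℝ)^(k-j) * (-1:ℝ)^(k-j)) := by
            rw [h2, mul_one]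
        _ = ((-1:ℝ)^(j+k) * (-1:ℝ)^(k-j)) * (-1:ℝ)^(k-j) := by ring
        _ = (-1:ℝ)^(k-j) := by rw [this, one_mul]
    rw [hsign]
    field_simp
  rw [Finset.sum_congr rfl hterm, ← Finset.sum_mul]
  have hfor := stirling_formula n k
  have hforR : ∑ j ∈ Finset.range (k+1), (-1:ℝ)^(k-j) * (k.choose j) * (j:ℝ)^n
      = (k.factorial : ℝ) * stirling n k := by
    exact_mod_cast congrArg (fun z : ℤ => (z : ℝ)) hfor.symm
  rw [hforR]
  have hk : (k.factorial : ℝ) ≠ 0 := Nat.cast_ne_zero.mpr k.factorial_ne_zero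
  field_simp
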